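/- arXiv:1601.03669 — 13 statements merged into one kernel-verified Lean document; each statement's English description precedes it below -/
import Mathlib

section
/- A nonzero tuple (x₀,x₁,x₂,x₃) ∈ k⁴ lies on E_c and satisfies x₀+x₁+x₂+x₃ = 0 if and only if it is a nonzero scalar multiple of one of the four tuples (1,0,0,1), (1,1,0,0), (0,1,1,0), (0,0,1,1). (The hyperplane X₀+X₁+X₂+X₃ = 0 cuts out exactly the cyclic subgroup ⟨T⟩ ≅ Z/4Z of E_c.) -/
theorem stmt_1 {k : Type*} [Field k] [CharP k 2] (c : k) (hc : c ≠ 0)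
    (x₀ x₁ x₂ x₃ : k) (hx : (x₀, x₁, x₂, x₃) ≠ ((0 : k), (0 : k), (0 : k), (0 : k))) :
    (((x₀ + x₁ + x₂ + x₃) ^ 2 = c * (x₀ * x₂) ∧
      (x₀ + x₁ + x₂ + x₃) ^ 2 = c * (x₁ * x₃)) ∧
      x₀ + x₁ + x₂ + x₃ = 0) ↔
    ∃ a : k, a ≠ 0 ∧
      ((x₀, x₁, x₂, x₃) = (a, (0 : k), (0 : k), a) ∨
       (x₀, x₁, x₂, x₃) = (a, a, (0 : k), (0 : k)) ∨
       (x₀, x₁, x₂, x₃) = ((0 : k), a, a, (0 : k)) ∨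
       (x₀, x₁, x₂, x₃) = ((0 : k), (0 : k), a, a)) := by
  have h2 : (2 : k) = 0 := by
    have := CharP.cast_eq_zero k 2; exact_mod_cast this
  constructor
  · rintro ⟨⟨h1, h2'⟩, hs⟩
    rw [hs] at h1 h2'
    have e1 : x₀ * x₂ = 0 := by
      have hcx : c * (x₀ * x₂) = 0 := by linear_combination -h1
      rcases mul_eq_zero.mp hcx with h | h
      · exact absurd h hc
      · exact h
    have e2 : x₁ * x₃ = 0 := by
      have hcx : c * (x₁ * x₃) = 0 := by linear_combination -h2'
      rcases mul_eq_zero.mp hcx with h | h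
      · exact absurd h hc
      · exact h
    rcases mul_eq_zero.mp e1 with h02 | h02 <;> rcases mul_eq_zero.mp e2 with h13 | h13
    · -- x₀ = 0, x₁ = 0
      refine ⟨x₂, ?_, ?_⟩
      · intro h; apply hx
        have : x₃ = 0 := by linear_combination hs - h02 - h13 - h
        simp [h02, h13, h, this]
      · right; right; right
        have : x₃ = x₂ := by linear_combination hs - h02 - h13 - x₂ * h2
        simp [h02, h13, this]
    · -- x₀ = 0, x₃ = 0
      refine ⟨x₁, ?_, ?_⟩
      · intro h; apply hx
        have : x₂ = 0 := by linear_combination hs - h02 - h13 - h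
        simp [h02, h13, h, this]
      · right; right; left
        have : x₂ = x₁ := by linear_combination hs - h02 - h13 - x₁ * h2
        simp [h02, h13, this]
    · -- x₂ = 0, x₁ = 0
      refine ⟨x₀, ?_, ?_⟩
      · intro h; apply hx
        have : x₃ = 0 := by linear_combination hs - h02 - h13 - h
        simp [h02, h13, h, this]
      · left
        have : x₃ = x₀ := by linear_combination hs - h02 - h13 - x₀ * h2
        simp [h02, h13, this]
    · -- x₂ = 0, x₃ = 0
      refine ⟨x₀, ?_, ?_⟩
      · intro h; apply hx
        have : x₁ = 0 := by linear_combination hs - h02 - h13 - h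
        simp [h02, h13, h, this]
      · right; left
        have : x₁ = x₀ := by linear_combination hs - h02 - h13 - x₀ * h2
        simp [h02, h13, this]
  · rintro ⟨a, ha, h | h | h | h⟩ <;>
      (simp only [Prod.mk.injEq] at h; obtain ⟨r0, r1, r2, r3⟩ := h;
       refine ⟨⟨?_, ?_⟩, ?_⟩ <;> rw [r0, r1, r2, r3] <;>
         first
         | linear_combination (2 * a ^ 2) * h2
         | linear_combination a * h2)
end

section
/- If (x₀,x₁,x₂,x₃) lies on E_c, then x₀x₂ = x₁x₃ (so the point lies on the skew-Segre quadric), and the pair of projections ((x₀:x₁),(x₀:x₃)) satisfies the biquadratic equation of the image curve E₁ in P¹×P¹: (x₀+x₁)²(x₀+x₃)² = c·(x₀x₁)·(x₀x₃). -/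
theorem stmt_2 {k : Type*} [Field k] [CharP k 2] (c : k) (hc : c ≠ 0)
    (x₀ x₁ x₂ x₃ : k)
    (h1 : (x₀ + x₁ + x₂ + x₃) ^ 2 = c * (x₀ * x₂))
    (h2 : (x₀ + x₁ + x₂ + x₃) ^ 2 = c * (x₁ * x₃)) :
    x₀ * x₂ = x₁ * x₃ ∧
    (x₀ + x₁) ^ 2 * (x₀ + x₃) ^ 2 = c * (x₀ * x₁) * (x₀ * x₃) := by
  have two : (2 : k) = 0 := by
    have := CharP.cast_eq_zero k 2
    simpa using this
  have hq : x₀ * x₂ = x₁ * x₃ := mul_left_cancel₀ hc (h1.symm.trans h2)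
  refine ⟨hq, ?_⟩
  linear_combination x₀ ^ 2 * h2 + (x₀ * x₂ + x₁ * x₃) * hq +
    (x₀ ^ 3 * x₁ + x₀ ^ 3 * x₃ + x₀ ^ 2 * x₁ * x₃ + x₀ * x₁ * x₂ * x₃ + x₁ ^ 2 * x₃ ^ 2
      + (-(x₀*x₁*x₃*x₂) + x₀*x₁*x₃^2 + x₀*x₁^2*x₃ - x₀^2*x₁*x₂ - x₀^2*x₃*x₂ - x₀^2*x₂^2
        - x₀^3*x₁ - x₀^3*x₃ - x₀^3*x₂)) * two
end

section
/- If (x₀,x₁,x₂,x₃) lies on E_c and (X,Y,Z) = (x₁+x₂, x₂, c(x₀+x₃)), then Y(Y+X)Z = X(X+c⁻¹Z)², i.e. the image lies on the Weierstrass curve Y(Y+X)Z = X(X+c⁻¹Z)². Moreover, if a nonzero (x₀,x₁,x₂,x₃) lies on E_c and x₁ = x₂ = 0, then x₀ = x₃, so the point is O = (1:0:0:1) (the unique point where the linear map vanishes). -/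
theorem stmt_4 {k : Type*} [Field k] [CharP k 2] (c : k) (hc : c ≠ 0)
    (x₀ x₁ x₂ x₃ : k)
    (h1 : (x₀ + x₁ + x₂ + x₃) ^ 2 = c * (x₀ * x₂))
    (h2 : (x₀ + x₁ + x₂ + x₃) ^ 2 = c * (x₁ * x₃)) :
    (x₂ * (x₂ + (x₁ + x₂)) * (c * (x₀ + x₃)) =
      (x₁ + x₂) * ((x₁ + x₂) + c⁻¹ * (c * (x₀ + x₃))) ^ 2) ∧
    ((x₀, x₁, x₂, x₃) ≠ ((0 : k), (0 : k), (0 : k), (0 : k)) → x₁ = 0 → x₂ = 0 →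
      x₀ = x₃ ∧ x₀ ≠ 0) := by
  have h2c : (2 : k) = 0 := by
    have := CharP.cast_eq_zero k 2
    simpa using this
  have hinv : c⁻¹ * c = 1 := inv_mul_cancel₀ hc
  constructor
  · have hci : c⁻¹ * (c * (x₀ + x₃)) = x₀ + x₃ := by
      rw [← mul_assoc, hinv, one_mul]
    rw [hci]
    linear_combination x₁ * h1 + x₂ * h2 +
      (x₂ * x₁ * c * x₀ + x₂ * x₁ * c * x₃ - 4 * x₂ * x₁ * x₀ - 4 * x₂ * x₁ * x₃
        - 3 * x₂ * x₁ ^ 2 - 2 * x₂ * x₀ * x₃ - x₂ * x₀ ^ 2 - x₂ * x₃ ^ 2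
        - 3 * x₂ ^ 2 * x₁ + x₂ ^ 2 * c * x₀ + x₂ ^ 2 * c * x₃ - 2 * x₂ ^ 2 * x₀
        - 2 * x₂ ^ 2 * x₃ - x₂ ^ 3 - 2 * x₁ * x₀ * x₃ - x₁ * x₀ ^ 2 - x₁ * x₃ ^ 2
        - 2 * x₁ ^ 2 * x₀ - 2 * x₁ ^ 2 * x₃ - x₁ ^ 3) * h2c
  · intro hne h1z h2z
    subst h1z h2z
    have hs : (x₀ + 0 + 0 + x₃) ^ 2 = 0 := by rw [h1]; ring
    have hsum : x₀ + x₃ = 0 := by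
      have : x₀ + x₃ = 0 ∨ x₀ + x₃ = 0 := by
        have h := sq_eq_zero_iff.mp (by linear_combination hs : (x₀ + x₃) ^ 2 = 0)
        exact Or.inl h
      tauto
    have heq : x₀ = x₃ := by linear_combination hsum - x₃ * h2c
    refine ⟨heq, fun h0 => hne ?_⟩
    subst heq h0
    simp_all
end

section
/- If (x₀,x₁,x₂,x₃) lies on C_c and (X,Y,Z) = (c(x₁+x₃), x₀+cx₁+x₂, c⁴x₂), then Y(Y+X)Z = X(X+c⁻²Z)², i.e. the image lies on the Weierstrass curve Y(Y+X)Z = X(X+c⁻²Z)². Moreover, if a nonzero (x₀,x₁,x₂,x₃) lies on C_c and x₂ = 0, then (x₀,x₁,x₂,x₃) is a scalar multiple of (c,1,0,1), i.e. the point is O (the unique point where the hyperplane X₂ = 0 meets C_c). -/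
theorem stmt_6 {k : Type*} [Field k] [CharP k 2] (c : k) (hc : c ≠ 0)
    (x₀ x₁ x₂ x₃ : k)
    (h1 : (x₀ + x₂) ^ 2 = c ^ 2 * (x₁ * x₃))
    (h2 : (x₁ + x₃) ^ 2 = c ^ 2 * (x₀ * x₂)) :
    ((x₀ + c * x₁ + x₂) * ((x₀ + c * x₁ + x₂) + c * (x₁ + x₃)) * (c ^ 4 * x₂) =
      (c * (x₁ + x₃)) * ((c * (x₁ + x₃)) + (c ^ 2)⁻¹ * (c ^ 4 * x₂)) ^ 2) ∧
    ((x₀, x₁, x₂, x₃) ≠ ((0 : k), (0 : k), (0 : k), (0 : k)) → x₂ = 0 →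
      ∃ a : k, a ≠ 0 ∧ (x₀, x₁, x₂, x₃) = (c * a, a, (0 : k), a)) := by
  have h2k : (2 : k) = 0 := by
    have := CharP.cast_eq_zero k 2
    simpa using this
  constructor
  · have e : (c ^ 2)⁻¹ * (c ^ 4 * x₂) = c ^ 2 * x₂ := by
      field_simp
    rw [e]
    linear_combination (c ^ 4 * x₂) * h1 - (c ^ 3 * (x₁ + x₃)) * h2 +
      (-c ^ 4 * x₂ * x₃ ^ 2 - 2 * c ^ 4 * x₁ * x₂ * x₃ - c ^ 4 * x₁ ^ 2 * x₂ +
        c ^ 5 * x₁ * x₂ ^ 2 + c ^ 5 * x₀ * x₁ * x₂ + c ^ 6 * x₁ * x₂ * x₃ +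
        c ^ 6 * x₁ ^ 2 * x₂) * h2k
  · intro hne hx2
    subst hx2
    have h3 : x₃ = x₁ := by
      have hsq : (x₃ - x₁) ^ 2 = 0 := by
        linear_combination h2 - 2 * x₁ * x₃ * h2k
      exact sub_eq_zero.mp (pow_eq_zero_iff (n := 2) (by norm_num) |>.mp hsq)
    have h0 : x₀ = c * x₁ := by
      have hsq : (x₀ - c * x₁) ^ 2 = 0 := by
        linear_combination h1 + c ^ 2 * x₁ * h3 + (c ^ 2 * x₁ ^ 2 - c * x₀ * x₁) * h2k
      exact sub_eq_zero.mp (pow_eq_zero_iff (n := 2) (by norm_num) |>.mp hsq)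
    have hx1 : x₁ ≠ 0 := by
      intro h
      apply hne
      simp [h, h0, h3]
    exact ⟨x₁, hx1, by simp [h0, h3]⟩
end

section
/- If (x₀,x₁,x₂,x₃) lies on C_c, then the tuple (c·x₀(x₀+x₂), (x₁+x₃)(x₀+x₂), c·x₁(x₁+x₃), c²·x₀x₁) lies on E_{c²}, i.e. it satisfies (X₀+X₁+X₂+X₃)² = c²X₀X₂ = c²X₁X₃. (This is the isomorphism ι: C_c → E_{c²} given as the skew-Segre composition of the two projections π₁(x) = (cx₀ : x₁+x₃) and π₂(x) = (x₀+x₂ : cx₁).) -/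
theorem stmt_8 {k : Type*} [Field k] [CharP k 2] (c : k) (hc : c ≠ 0)
    (x₀ x₁ x₂ x₃ : k)
    (h1 : (x₀ + x₂) ^ 2 = c ^ 2 * (x₁ * x₃))
    (h2 : (x₁ + x₃) ^ 2 = c ^ 2 * (x₀ * x₂)) :
    (c * (x₀ * (x₀ + x₂)) + (x₁ + x₃) * (x₀ + x₂) + c * (x₁ * (x₁ + x₃)) +
        c ^ 2 * (x₀ * x₁)) ^ 2 =
      c ^ 2 * ((c * (x₀ * (x₀ + x₂))) * (c * (x₁ * (x₁ + x₃)))) ∧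
    (c * (x₀ * (x₀ + x₂)) + (x₁ + x₃) * (x₀ + x₂) + c * (x₁ * (x₁ + x₃)) +
        c ^ 2 * (x₀ * x₁)) ^ 2 =
      c ^ 2 * (((x₁ + x₃) * (x₀ + x₂)) * (c ^ 2 * (x₀ * x₁))) := by
  have two : (2 : k) = 0 := by
    have := CharP.cast_eq_zero k 2
    simpa using this
  set a := c * (x₀ * (x₀ + x₂)) with ha
  set b := (x₁ + x₃) * (x₀ + x₂) with hb
  set d := c * (x₁ * (x₁ + x₃)) with hd
  set e := c ^ 2 * (x₀ * x₁) with he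
  constructor
  · linear_combination (c^2*x₀^2 + (x₁+x₃)^2) * h1 + (c^2*x₁*x₃ + c^2*x₁^2) * h2 +
      (a*b + a*d + a*e + b*d + b*e + d*e) * two
  · linear_combination (c^2*x₀^2 + (x₁+x₃)^2) * h1 + (c^2*x₁*x₃ + c^2*x₁^2) * h2 +
      (a*b + a*d + a*e + b*d + b*e + d*e) * two
end

section
/- Let (x₀,x₁,x₂,x₃) and (y₀,y₁,y₂,y₃) lie on E_c. Then the two basis elements of each addition law projection agree projectively: (x₀y₃+x₂y₁)(x₀y₁+x₂y₃) = (x₁y₀+x₃y₂)(x₁y₂+x₃y₀), and (x₀y₀+x₂y₂)(x₀y₂+x₂y₀) = (x₁y₁+x₃y₃)(x₁y₃+x₃y₁). (These identities express that the two listed bilinear addition laws for π₁∘μ, respectively for π₂∘μ, define the same rational map E_c × E_c → P¹ where both are defined.) -/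
theorem stmt_11 {k : Type*} [Field k] [CharP k 2] (c : k) (hc : c ≠ 0)
    (x₀ x₁ x₂ x₃ y₀ y₁ y₂ y₃ : k)
    (hx1 : (x₀ + x₁ + x₂ + x₃) ^ 2 = c * (x₀ * x₂))
    (hx2 : (x₀ + x₁ + x₂ + x₃) ^ 2 = c * (x₁ * x₃))
    (hy1 : (y₀ + y₁ + y₂ + y₃) ^ 2 = c * (y₀ * y₂))
    (hy2 : (y₀ + y₁ + y₂ + y₃) ^ 2 = c * (y₁ * y₃)) :
    (x₀ * y₃ + x₂ * y₁) * (x₀ * y₁ + x₂ * y₃) =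
      (x₁ * y₀ + x₃ * y₂) * (x₁ * y₂ + x₃ * y₀) ∧
    (x₀ * y₀ + x₂ * y₂) * (x₀ * y₂ + x₂ * y₀) =
      (x₁ * y₁ + x₃ * y₃) * (x₁ * y₃ + x₃ * y₁) := by
  have h2 : (2 : k) = 0 := by
    have := CharP.cast_eq_zero k 2
    exact_mod_cast this
  have hx : x₀ * x₂ = x₁ * x₃ := mul_left_cancel₀ hc (hx1 ▸ hx2)
  have hy : y₀ * y₂ = y₁ * y₃ := mul_left_cancel₀ hc (hy1 ▸ hy2)
  constructor
  · linear_combination y₁*y₃*hx2 + x₀*x₂*hy2 + (x₁+x₃)^2*hy + (y₀+y₂)^2*hx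
      - c*y₁*y₃*hx
      + (-x₃^2*y₀*y₂ - x₂*x₃*y₁*y₃ - x₁*x₂*y₁*y₃ - x₁^2*y₀*y₂ - x₀*x₃*y₁*y₃
        - x₀*x₂*y₂*y₃ - x₀*x₂*y₂^2 - 2*x₀*x₂*y₁*y₃ - x₀*x₂*y₁*y₂
        - x₀*x₂*y₀*y₃ - 2*x₀*x₂*y₀*y₂ - x₀*x₂*y₀*y₁ - x₀*x₂*y₀^2
        - x₀*x₁*y₁*y₃ + c*x₀*x₂*y₁*y₃) * h2
  · linear_combination y₁*y₃*hx2 + x₀*x₂*hy2 + (x₀+x₂)^2*hy + (y₁+y₃)^2*hx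
      - c*y₁*y₃*hx
      + (-x₃^2*y₁*y₃ - x₂*x₃*y₁*y₃ - x₁*x₂*y₁*y₃ - x₁^2*y₁*y₃ - x₀*x₃*y₁*y₃
        - x₀*x₂*y₃^2 - x₀*x₂*y₂*y₃ - 2*x₀*x₂*y₁*y₃ - x₀*x₂*y₁*y₂
        - x₀*x₂*y₁^2 - x₀*x₂*y₀*y₃ - 2*x₀*x₂*y₀*y₂ - x₀*x₂*y₀*y₁
        - x₀*x₁*y₁*y₃ + c*x₀*x₂*y₁*y₃) * h2
end

section
/- Let (x₀,x₁,x₂,x₃) lie on E_c. Set a = x₀x₃+x₁x₂, b = x₀x₁+x₂x₃, p = (x₀+x₂)², q = (x₁+x₃)². Then a + b = (x₀+x₂)(x₁+x₃) (an identity of polynomials in characteristic 2), and the skew-Segre tuple (a·p, b·p, b·q, a·q) lies on E_c. (This is the duplication formula on E_c: π₁∘[2](x) = (a : b), π₂∘[2](x) = (p : q), composed with the skew-Segre embedding; the Karatsuba-type factorization of a+b underlies the 7M+2S duplication algorithm.) -/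
theorem stmt_12 {k : Type*} [Field k] [CharP k 2] (c : k) (hc : c ≠ 0)
    (x₀ x₁ x₂ x₃ : k)
    (h1 : (x₀ + x₁ + x₂ + x₃) ^ 2 = c * (x₀ * x₂))
    (h2 : (x₀ + x₁ + x₂ + x₃) ^ 2 = c * (x₁ * x₃))
    (a b p q : k)
    (ha : a = x₀ * x₃ + x₁ * x₂) (hb : b = x₀ * x₁ + x₂ * x₃)
    (hp : p = (x₀ + x₂) ^ 2) (hq : q = (x₁ + x₃) ^ 2) :
    a + b = (x₀ + x₂) * (x₁ + x₃) ∧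
    (a * p + b * p + b * q + a * q) ^ 2 = c * ((a * p) * (b * q)) ∧
    (a * p + b * p + b * q + a * q) ^ 2 = c * ((b * p) * (a * q)) := by
  have two : (2 : k) = 0 := by
    have := CharP.cast_eq_zero k 2
    exact_mod_cast this
  have key : x₀ * x₂ = x₁ * x₃ := mul_left_cancel₀ hc (h1.symm.trans h2)
  have habsq : (a + b) ^ 2 = p * q := by rw [ha, hb, hp, hq]; ring
  have hpq : p + q = c * (x₀ * x₂) := by
    rw [hp, hq]
    linear_combination h1 - (x₀*x₁ + x₀*x₃ + x₁*x₂ + x₂*x₃) * two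
  have hab2 : a * b = (x₀ * x₂) * (c * (x₀ * x₂)) := by
    rw [ha, hb]
    linear_combination (-(x₀^2 + x₂^2)) * key + (x₀*x₂) * h1 -
      (x₀*x₂*(x₀*x₁ + x₀*x₂ + x₀*x₃ + x₁*x₂ + x₁*x₃ + x₂*x₃)) * two
  refine ⟨by rw [ha, hb]; ring, ?_, ?_⟩ <;>
    linear_combination (p+q)^2 * habsq + p*q*(p+q+c*(x₀*x₂)) * hpq - c*p*q * hab2
end

section
/- Let (x₀,x₁,x₂,x₃) and (y₀,y₁,y₂,y₃) lie on C_c. Then the tuple ((x₀y₀+x₂y₂)², c(x₀x₁y₀y₁+x₂x₃y₂y₃), (x₁y₁+x₃y₃)², c(x₀x₃y₀y₃+x₁x₂y₁y₂)) lies on C_c. (This is the closure of the first bidegree-(2,2) addition law on the split μ₄-normal form.) -/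
theorem stmt_13 {k : Type*} [Field k] [CharP k 2] (c : k) (hc : c ≠ 0)
    (x₀ x₁ x₂ x₃ y₀ y₁ y₂ y₃ : k)
    (hx1 : (x₀ + x₂) ^ 2 = c ^ 2 * (x₁ * x₃))
    (hx2 : (x₁ + x₃) ^ 2 = c ^ 2 * (x₀ * x₂))
    (hy1 : (y₀ + y₂) ^ 2 = c ^ 2 * (y₁ * y₃))
    (hy2 : (y₁ + y₃) ^ 2 = c ^ 2 * (y₀ * y₂)) :
    ((x₀ * y₀ + x₂ * y₂) ^ 2 + (x₁ * y₁ + x₃ * y₃) ^ 2) ^ 2 =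
      c ^ 2 * ((c * (x₀ * x₁ * (y₀ * y₁) + x₂ * x₃ * (y₂ * y₃))) *
        (c * (x₀ * x₃ * (y₀ * y₃) + x₁ * x₂ * (y₁ * y₂)))) ∧
    (c * (x₀ * x₁ * (y₀ * y₁) + x₂ * x₃ * (y₂ * y₃)) +
        c * (x₀ * x₃ * (y₀ * y₃) + x₁ * x₂ * (y₁ * y₂))) ^ 2 =
      c ^ 2 * ((x₀ * y₀ + x₂ * y₂) ^ 2 * (x₁ * y₁ + x₃ * y₃) ^ 2) := by
  haveI : Fact (Nat.Prime 2) := ⟨Nat.prime_two⟩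
  have h2 : (2 : k) = 0 := by
    have := CharP.cast_eq_zero k 2
    simpa using this
  constructor
  · linear_combination (x₂^2*y₀^2*y₂^2 + x₀^2*y₀^4 + c^2*x₂^2*y₀^2*y₁*y₃ + c^2*x₁*x₃*y₀^2*y₂^2 + c^4*x₂^2*y₃^4 + c^6*x₂^2*y₀*y₂*y₃^2) * hx1 + (x₃^2*y₁^2*y₃^2 + x₁^2*y₁^4 + c^2*x₃^2*y₀*y₁^2*y₂ + c^2*x₀*x₂*y₁^2*y₃^2 + c^4*x₃^2*y₀^2*y₂^2) * hx2 + (x₂^4*y₂^2 + x₀^2*x₂^2*y₀^2 + c^2*x₂^4*y₁*y₃ + c^2*x₀^2*x₁*x₃*y₀^2 + c^4*x₁*x₂^2*x₃*y₁*y₃) * hy1 + (x₃^4*y₃^2 + x₁^2*x₃^2*y₁^2 + c^2*x₃^4*y₀*y₂ + c^2*x₀*x₁^2*x₂*y₁^2 + c^4*x₂^4*y₃^2 + c^4*x₀*x₂*x₃^2*y₀*y₂ + c^4*x₀^2*x₂^2*y₃^2 + c^6*x₁*x₂^2*x₃*y₃^2) * hy2 + ((-1 : k)*x₃^4*y₁*y₃^3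 + (-1 : k)*x₃^4*y₁^2*y₃^2 + x₂^2*x₃^2*y₂^2*y₃^2 + (-1 : k)*x₂^4*y₀*y₂^3 + (-1 : k)*x₂^4*y₀^2*y₂^2 + (2 : k)*x₁*x₃^3*y₁*y₃^3 + (-1 : k)*x₁*x₃^3*y₁^2*y₃^2 + (2 : k)*x₁*x₂^2*x₃*y₁*y₂^2*y₃ + (2 : k)*x₁^2*x₃^2*y₁^2*y₃^2 + (-1 : k)*x₁^2*x₃^2*y₁^3*y₃ + (-1 : k)*x₁^2*x₃^2*y₁^4 + x₁^2*x₂^2*y₁^2*y₂^2 + (2 : k)*x₁^3*x₃*y₁^3*y₃ + (-1 : k)*x₁^3*x₃*y₁^4 + (2 : k)*x₀*x₂*x₃^2*y₀*y₂*y₃^2 + (2 : k)*x₀*x₂^3*y₀*y₂^3 + (-1 : k)*x₀*x₂^3*y₀^2*y₂^2 + (4 : k)*x₀*x₁*x₂*x₃*y₀*y₁*y₂*y₃ + (2 : k)*x₀*x₁^2*x₂*y₀*y₁^2*y₂ + x₀^2*x₃^2*y₀^2*y₃^2 + (2 : k)*x₀^2*x₂^2*y₀^2*y₂^2 + (-1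 : k)*x₀^2*x₂^2*y₀^3*y₂ + (-1 : k)*x₀^2*x₂^2*y₀^4 + (2 : k)*x₀^2*x₁*x₃*y₀^2*y₁*y₃ + x₀^2*x₁^2*y₀^2*y₁^2 + (2 : k)*x₀^3*x₂*y₀^3*y₂ + (-1 : k)*x₀^3*x₂*y₀^4 + (-1 : k)*c^2*x₃^4*y₀*y₁*y₂*y₃ + (-1 : k)*c^2*x₃^4*y₀*y₁^2*y₂ + (-1 : k)*c^2*x₂^4*y₀*y₁*y₂*y₃ + (-1 : k)*c^2*x₂^4*y₀^2*y₁*y₃ + (-1 : k)*c^2*x₁*x₃^3*y₀*y₁^2*y₂ + (-1 : k)*c^2*x₀*x₂^3*y₀^2*y₁*y₃ + (-1 : k)*c^2*x₀*x₁*x₂*x₃*y₁^2*y₃^2 + (-1 : k)*c^2*x₀*x₁*x₂*x₃*y₀^2*y₂^2 + (-1 : k)*c^2*x₀*x₁^2*x₂*y₁^2*y₃^2 + (-1 : k)*c^2*x₀*x₁^2*x₂*y₁^3*y₃ + (-1 : k)*c^2*x₀^2*x₁*x₃*y₀^2*y₂^2 + (-1 : k)*c^2*x₀^2*x₁*x₃*y₀^3*y₂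 + (-1 : k)*c^4*x₂^4*y₃^4 + (-1 : k)*c^4*x₂^4*y₁*y₃^3 + (-1 : k)*c^4*x₁*x₃^3*y₀^2*y₂^2 + (-1 : k)*c^4*x₁*x₂^2*x₃*y₁*y₂^2*y₃ + (-1 : k)*c^4*x₁*x₂^2*x₃*y₀*y₁*y₂*y₃ + (-1 : k)*c^4*x₀*x₂*x₃^2*y₀*y₂*y₃^2 + (-1 : k)*c^4*x₀*x₂*x₃^2*y₀*y₁*y₂*y₃ + (-1 : k)*c^4*x₀*x₂^3*y₃^4 + (-1 : k)*c^4*x₀^2*x₂^2*y₃^4 + (-1 : k)*c^4*x₀^2*x₂^2*y₁*y₃^3 + (-1 : k)*c^6*x₁*x₂^2*x₃*y₁*y₃^3 + c^6*x₀*x₂*x₃^2*y₀^2*y₂^2 + (-1 : k)*c^6*x₀*x₂^3*y₀*y₂*y₃^2 + c^8*x₁*x₂^2*x₃*y₀*y₂*y₃^2) * h2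
  · ring
end

section
/- Let (x₀,x₁,x₂,x₃) lie on C_c. Evaluating the first addition law at (x, O) with O = (c,1,0,1) yields exactly c²x₀·(x₀,x₁,x₂,x₃): namely ((x₀·c+x₂·0)², c(x₀x₁·c·1+x₂x₃·0·1), (x₁·1+x₃·1)², c(x₀x₃·c·1+x₁x₂·1·0)) = (c²x₀², c²x₀x₁, c²x₀x₂, c²x₀x₃), using (x₁+x₃)² = c²x₀x₂. Consequently this tuple is the zero tuple if and only if x₀ = 0; moreover any nonzero point of C_c with x₀ = 0 is a scalar multiple of (0,1,c,1) (the 2-torsion point S, identifying the exceptional divisor 4Δ_S of this addition law). -/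
theorem stmt_14 {k : Type*} [Field k] [CharP k 2] (c : k) (hc : c ≠ 0)
    (x₀ x₁ x₂ x₃ : k)
    (h1 : (x₀ + x₂) ^ 2 = c ^ 2 * (x₁ * x₃))
    (h2 : (x₁ + x₃) ^ 2 = c ^ 2 * (x₀ * x₂)) :
    (((x₀ * c + x₂ * 0) ^ 2,
      c * (x₀ * x₁ * (c * 1) + x₂ * x₃ * (0 * 1)),
      (x₁ * 1 + x₃ * 1) ^ 2,
      c * (x₀ * x₃ * (c * 1) + x₁ * x₂ * (1 * 0))) =
      (c ^ 2 * x₀ ^ 2, c ^ 2 * (x₀ * x₁), c ^ 2 * (x₀ * x₂), c ^ 2 * (x₀ * x₃))) ∧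
    ((c ^ 2 * x₀ ^ 2, c ^ 2 * (x₀ * x₁), c ^ 2 * (x₀ * x₂), c ^ 2 * (x₀ * x₃)) =
      ((0 : k), (0 : k), (0 : k), (0 : k)) ↔ x₀ = 0) ∧
    ((x₀, x₁, x₂, x₃) ≠ ((0 : k), (0 : k), (0 : k), (0 : k)) → x₀ = 0 →
      ∃ a : k, a ≠ 0 ∧ (x₀, x₁, x₂, x₃) = ((0 : k), a, c * a, a)) := by
  have two : (2 : k) = 0 := by exact_mod_cast CharP.cast_eq_zero k 2
  refine ⟨?_, ?_, ?_⟩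
  · simp only [Prod.mk.injEq]
    refine ⟨by ring, by ring, ?_, by ring⟩
    rw [mul_one, mul_one, h2]
  · constructor
    · intro h
      have h0 : c ^ 2 * x₀ ^ 2 = 0 := (Prod.mk.injEq _ _ _ _ ▸ h).1
      rcases mul_eq_zero.mp h0 with h' | h'
      · exact absurd h' (pow_ne_zero 2 hc)
      · exact pow_eq_zero_iff (by norm_num) |>.mp h'
    · rintro rfl
      simp [Prod.ext_iff]
  · intro hne h0
    subst h0
    have h13 : x₁ + x₃ = 0 := by
      have : (x₁ + x₃) ^ 2 = 0 := by rw [h2]; ring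
      exact pow_eq_zero_iff (by norm_num) |>.mp this
    have hx13 : x₁ = x₃ := by linear_combination h13 - x₃ * two
    have hx2 : x₂ = c * x₁ := by
      have hsq : (x₂ + c * x₁) ^ 2 = 0 := by
        have h1' : x₂ ^ 2 = c ^ 2 * (x₁ * x₁) := by rw [← hx13] at h1; linear_combination h1
        linear_combination h1' + (x₂ * c * x₁ + c ^ 2 * x₁ ^ 2) * two
      have := pow_eq_zero_iff (n := 2) (by norm_num) |>.mp hsq
      linear_combination this - c * x₁ * two
    have hx1 : x₁ ≠ 0 := by
      intro h
      apply hne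
      subst h
      simp [hx2, ← hx13]
    exact ⟨x₁, hx1, by rw [hx2, ← hx13]⟩
end

section
/- If (x₀,x₁,x₂,x₃) lies on C_c, then the duplication tuple ((x₀+x₂)⁴, c(x₀x₁+x₂x₃)², (x₁+x₃)⁴, c(x₀x₃+x₁x₂)²) also lies on C_c. (This is the duplication morphism [2] on the split μ₄-normal form.) -/
theorem stmt_15 {k : Type*} [Field k] [CharP k 2] (c : k) (hc : c ≠ 0)
    (x₀ x₁ x₂ x₃ : k)
    (h1 : (x₀ + x₂) ^ 2 = c ^ 2 * (x₁ * x₃))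
    (h2 : (x₁ + x₃) ^ 2 = c ^ 2 * (x₀ * x₂)) :
    ((x₀ + x₂) ^ 4 + (x₁ + x₃) ^ 4) ^ 2 =
      c ^ 2 * ((c * (x₀ * x₁ + x₂ * x₃) ^ 2) * (c * (x₀ * x₃ + x₁ * x₂) ^ 2)) ∧
    (c * (x₀ * x₁ + x₂ * x₃) ^ 2 + c * (x₀ * x₃ + x₁ * x₂) ^ 2) ^ 2 =
      c ^ 2 * ((x₀ + x₂) ^ 4 * (x₁ + x₃) ^ 4) := by
  have two : (2 : k) = 0 := by exact_mod_cast CharP.cast_eq_zero k 2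
  have key : (x₀*x₁+x₂*x₃)*(x₀*x₃+x₁*x₂) = c^2*(x₁*x₃)^2 + c^2*(x₀*x₂)^2 := by
    have h : (x₀*x₁+x₂*x₃)*(x₀*x₃+x₁*x₂)
        = x₁*x₃*((x₀+x₂)^2) + x₀*x₂*((x₁+x₃)^2) := by
      linear_combination (-2*x₀*x₁*x₂*x₃) * two
    rw [h, h1, h2]; ring
  constructor
  · have e1 : (x₀+x₂)^4 = (c^2*(x₁*x₃))^2 := by rw [← h1]; ring
    have e2 : (x₁+x₃)^4 = (c^2*(x₀*x₂))^2 := by rw [← h2]; ring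
    rw [e1, e2]
    linear_combination (-c^4*((c^2*(x₁*x₃)^2 + c^2*(x₀*x₂)^2) +
      (x₀*x₁+x₂*x₃)*(x₀*x₃+x₁*x₂))) * key
  · linear_combination (-c^2*(((x₀*x₁+x₂*x₃)^2+(x₀*x₃+x₁*x₂)^2) +
      ((x₀*x₁+x₂*x₃)+(x₀*x₃+x₁*x₂))^2)*(x₀*x₁+x₂*x₃)*(x₀*x₃+x₁*x₂)) * two
end

section
/- Let (x₀,x₁,x₂,x₃) lie on C_c, and set F = (x₀+cx₃)(cx₁+x₂) and G = (x₀+cx₁)(x₂+cx₃). Then F + G = c(x₀+x₂)(x₁+x₃) (an identity of polynomials in characteristic 2), and on C_c the following hold (stated with denominators cleared): c⁶(x₀x₁+x₂x₃)² = c⁴(x₀+x₂)⁴ + (x₁+x₃)⁴ + c⁴F² and c⁶(x₀x₃+x₁x₂)² = c⁴(x₀+x₂)⁴ + (x₁+x₃)⁴ + c⁴G². (These identities underlie the 2M+5S duplication algorithm on C_c.) -/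
theorem stmt_16 {k : Type*} [Field k] [CharP k 2] (c : k) (hc : c ≠ 0)
    (x₀ x₁ x₂ x₃ : k)
    (h1 : (x₀ + x₂) ^ 2 = c ^ 2 * (x₁ * x₃))
    (h2 : (x₁ + x₃) ^ 2 = c ^ 2 * (x₀ * x₂))
    (F G : k)
    (hF : F = (x₀ + c * x₃) * (c * x₁ + x₂))
    (hG : G = (x₀ + c * x₁) * (x₂ + c * x₃)) :
    F + G = c * ((x₀ + x₂) * (x₁ + x₃)) ∧
    c ^ 6 * (x₀ * x₁ + x₂ * x₃) ^ 2 =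
      c ^ 4 * (x₀ + x₂) ^ 4 + (x₁ + x₃) ^ 4 + c ^ 4 * F ^ 2 ∧
    c ^ 6 * (x₀ * x₃ + x₁ * x₂) ^ 2 =
      c ^ 4 * (x₀ + x₂) ^ 4 + (x₁ + x₃) ^ 4 + c ^ 4 * G ^ 2 := by
  have htwo : (2 : k) = 0 := by
    exact_mod_cast (CharP.cast_eq_zero k 2)
  subst hF hG
  refine ⟨?_, ?_, ?_⟩
  · linear_combination (x₀ * x₂ + c ^ 2 * x₁ * x₃) * htwo
  · linear_combination (-(c ^ 4 * ((x₀ + x₂) ^ 2 + c ^ 2 * (x₁ * x₃)))) * h1 +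
      (-((x₁ + x₃) ^ 2 + c ^ 2 * (x₀ * x₂))) * h2 +
      (-(c ^ 6 * x₀ * x₁ * x₂ * x₃ + c ^ 4 * x₀ ^ 2 * x₂ ^ 2 + c ^ 5 * x₀ ^ 2 * x₁ * x₂ +
        c ^ 7 * x₀ * x₁ ^ 2 * x₃ + c ^ 5 * x₀ * x₂ ^ 2 * x₃ + c ^ 8 * x₁ ^ 2 * x₃ ^ 2 +
        c ^ 7 * x₁ * x₂ * x₃ ^ 2)) * htwo
  · linear_combination (-(c ^ 4 * ((x₀ + x₂) ^ 2 + c ^ 2 * (x₁ * x₃)))) * h1 +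
      (-((x₁ + x₃) ^ 2 + c ^ 2 * (x₀ * x₂))) * h2 +
      (-(c ^ 6 * x₀ * x₁ * x₂ * x₃ + c ^ 4 * x₀ ^ 2 * x₂ ^ 2 + c ^ 5 * x₀ ^ 2 * x₂ * x₃ +
        c ^ 5 * x₀ * x₁ * x₂ ^ 2 + c ^ 7 * x₀ * x₁ * x₃ ^ 2 + c ^ 7 * x₁ ^ 2 * x₂ * x₃ +
        c ^ 8 * x₁ ^ 2 * x₃ ^ 2)) * htwo
end

section
/- Let (s₀,s₁,s₂,s₃) and (x₀,x₁,x₂,x₃) both lie on C_c. Set U₀ = c·x₀, U₁ = x₁+x₃, V₀ = s₀x₀+s₂x₂, V₁ = s₁x₁+s₃x₃ (so that (U₀:U₁) is the Kummer image of Q = x and (V₀:V₁) that of Q−S for S = s). Then s₀(U₀V₁+U₁V₀)² + s₂(U₀V₀+U₁V₁)² = c(s₁+s₃)·U₀U₁V₀V₁ . (This is the defining equation of the Kummer-oriented curve K(Δ_S) ⊂ K×K for the split μ₄-normal form.) -/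
theorem stmt_18 {k : Type*} [Field k] [CharP k 2] (c : k) (hc : c ≠ 0)
    (s₀ s₁ s₂ s₃ x₀ x₁ x₂ x₃ : k)
    (hs1 : (s₀ + s₂) ^ 2 = c ^ 2 * (s₁ * s₃))
    (hs2 : (s₁ + s₃) ^ 2 = c ^ 2 * (s₀ * s₂))
    (hx1 : (x₀ + x₂) ^ 2 = c ^ 2 * (x₁ * x₃))
    (hx2 : (x₁ + x₃) ^ 2 = c ^ 2 * (x₀ * x₂))
    (U₀ U₁ V₀ V₁ : k)
    (hU₀ : U₀ = c * x₀) (hU₁ : U₁ = x₁ + x₃)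
    (hV₀ : V₀ = s₀ * x₀ + s₂ * x₂) (hV₁ : V₁ = s₁ * x₁ + s₃ * x₃) :
    s₀ * (U₀ * V₁ + U₁ * V₀) ^ 2 + s₂ * (U₀ * V₀ + U₁ * V₁) ^ 2 =
      c * (s₁ + s₃) * (U₀ * U₁ * (V₀ * V₁)) := by
  have h2 : (2 : k) = 0 := by exact_mod_cast CharP.cast_eq_zero k 2
  subst hU₀ hU₁ hV₀ hV₁
  linear_combination (s₀*x₀^2*x₃^2 + s₀*x₀^2*x₁^2 + c^2*s₂*x₀^4 + c^4*s₂*x₀^2*x₁*x₃) * hs1 + (s₂*x₁^2*x₃^2 + s₂*x₁^4 + c^2*s₂*x₀*x₁*x₂*x₃ + c^2*s₂*x₀*x₁^2*x₂ + c^2*s₀*x₀^2*x₁*x₃) * hs2 + (s₀*s₂^2*x₃^2 + s₀*s₂^2*x₁^2 + c^2*s₂^3*x₀^2 + c^4*s₁*s₂*s₃*x₀^2) * hx1 + (s₂*s₃^2*x₃^2 + s₂*s₃^2*x₁^2 + c^2*s₁*s₂*s₃*x₀*x₂ + c^2*s₀*s₂^2*x₁*x₃ + c^2*s₀*s₂^2*x₁^2)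 * hx2 + (-s₂*s₃^2*x₁^2*x₃^2 - s₂*s₃^2*x₁^3*x₃ - s₂*s₃^2*x₁^4 + s₁*s₂*s₃*x₁*x₃^3 + s₁*s₂*s₃*x₁^2*x₃^2 + s₁*s₂*s₃*x₁^3*x₃ - s₁*s₂*s₃*x₁^4 + s₁^2*s₂*x₁^3*x₃ + s₀*s₂^2*x₁*x₂^2*x₃ - s₀*s₂^2*x₀*x₂*x₃^2 - s₀*s₂^2*x₀*x₁^2*x₂ - s₀*s₂^2*x₀^2*x₃^2 - s₀*s₂^2*x₀^2*x₁^2 + s₀^2*s₂*x₀*x₂*x₃^2 + 2*s₀^2*s₂*x₀*x₁*x₂*x₃ + s₀^2*s₂*x₀*x₁^2*x₂ - s₀^2*s₂*x₀^2*x₃^2 - s₀^2*s₂*x₀^2*x₁^2 + s₀^3*x₀^2*x₁*x₃ + c*s₂^2*s₃*x₀*x₂*x₃^2 + c*s₂^2*s₃*x₀*x₁*x₂*x₃ + c*s₁*s₂^2*x₀*x₁*x₂*x₃ + c*s₁*s₂^2*x₀*x₁^2*x₂ + c*s₀*s₂*s₃*x₀*x₂*x₃^2 + c*s₀*s₂*s₃*x₀*x₁*x₂*x₃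 + c*s₀*s₂*s₃*x₀^2*x₃^2 + c*s₀*s₂*s₃*x₀^2*x₁*x₃ + c*s₀*s₁*s₂*x₀*x₁*x₂*x₃ + c*s₀*s₁*s₂*x₀*x₁^2*x₂ + c*s₀*s₁*s₂*x₀^2*x₁*x₃ + c*s₀*s₁*s₂*x₀^2*x₁^2 + c*s₀^2*s₃*x₀^2*x₃^2 + c*s₀^2*s₃*x₀^2*x₁*x₃ + c*s₀^2*s₁*x₀^2*x₁*x₃ + c*s₀^2*s₁*x₀^2*x₁^2 - c^2*s₂*s₃^2*x₀*x₁*x₂*x₃ - c^2*s₂^3*x₀^3*x₂ - c^2*s₂^3*x₀^4 - c^2*s₁*s₂*s₃*x₀*x₂*x₃^2 - 3*c^2*s₁*s₂*s₃*x₀*x₁*x₂*x₃ - 2*c^2*s₁*s₂*s₃*x₀*x₁^2*x₂ - c^2*s₁^2*s₂*x₀*x₁*x₂*x₃ - c^2*s₁^2*s₂*x₀*x₁^2*x₂ - c^2*s₀*s₃^2*x₀^2*x₁*x₃ - c^2*s₀*s₂^2*x₁^2*x₃^2 - c^2*s₀*s₂^2*x₁^3*x₃ + c^2*s₀*s₂^2*x₀^3*x₂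 - c^2*s₀*s₂^2*x₀^4 - c^2*s₀*s₁*s₃*x₀^2*x₁*x₃ - c^2*s₀*s₁^2*x₀^2*x₁*x₃ - c^4*s₁*s₂*s₃*x₀^3*x₂ + c^4*s₀*s₂^2*x₀*x₁*x₂*x₃ + c^4*s₀*s₂^2*x₀*x₁^2*x₂ - c^4*s₀*s₂^2*x₀^2*x₁*x₃ + c^6*s₁*s₂*s₃*x₀^2*x₁*x₃) * h2
end

section
/- Let (x₀,x₁,x₂,x₃) lie on E_c. Then (x₀⁴+x₁⁴)·(x₀x₁+x₂x₃) = c·x₀²x₁²·(x₀x₃+x₁x₂). (Since π₁([2]Q) = (x₀x₃+x₁x₂ : x₀x₁+x₂x₃), this identity expresses the Kummer duplication formula, i.e. the first projection of the Montgomery endomorphism: if (u₀:u₁) = (x₀:x₁) is the Kummer image of Q, then the Kummer image of 2Q is (u₀⁴+u₁⁴ : c·u₀²u₁²), where c is the parameter of the Z/4Z-normal form.) -/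
theorem stmt_19 {k : Type*} [Field k] [CharP k 2] (c : k) (hc : c ≠ 0)
    (x₀ x₁ x₂ x₃ : k)
    (h1 : (x₀ + x₁ + x₂ + x₃) ^ 2 = c * (x₀ * x₂))
    (h2 : (x₀ + x₁ + x₂ + x₃) ^ 2 = c * (x₁ * x₃)) :
    (x₀ ^ 4 + x₁ ^ 4) * (x₀ * x₁ + x₂ * x₃) =
      c * (x₀ ^ 2 * x₁ ^ 2) * (x₀ * x₃ + x₁ * x₂) := by
  have htwo : (2 : k) = 0 := by
    have := CharP.cast_eq_zero k 2
    simpa using this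
  have hg1 : x₀ * x₂ = x₁ * x₃ := by
    apply mul_left_cancel₀ hc
    rw [← h1, ← h2]
  linear_combination (x₁^3*x₂ + x₀*x₁^2*x₃ + x₀^2*x₁*x₂ + x₀^3*x₃ + c*x₀^3*x₁) * hg1
    + (x₀*x₁^3 + x₀^3*x₁) * h1
    + (x₁^4*x₂*x₃ - x₀*x₁^3*x₂*x₃ - x₀*x₁^3*x₂^2 - x₀*x₁^4*x₃ - x₀*x₁^4*x₂
      - x₀^2*x₁^3*x₃ - x₀^2*x₁^3*x₂ - x₀^2*x₁^4 - x₀^3*x₁*x₂*x₃ - x₀^3*x₁*x₂^2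
      - x₀^3*x₁^2*x₃ - x₀^3*x₁^2*x₂ - x₀^3*x₁^3 - x₀^4*x₁*x₃ - x₀^4*x₁*x₂
      - x₀^4*x₁^2) * htwo
end
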